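/- Let σ ∈ S_n, δ > 0, ε ≥ 0, and F : {1,…,n+1} → ℝ. Call an index i ∈ {1,…,n+1} Q-type if i = 1 or (2 ≤ i ≤ n and σ(i) > σ(i−1)), and P-type if i = n+1 or (2 ≤ i ≤ n and σ(i) < σ(i−1)). Assume F(i) − F(j) ≥ δ whenever i is Q-type and j is P-type. For 1 ≤ k ≤ n set X_σ(k) := kε + i·Σ_{l=n−k+1}^{n} ( F(σ⁻¹(l)) − F(σ⁻¹(l)+1) ) ∈ ℂ, and let n_k := |S^<_σ(n−k+1)|. Then |X_σ(k)|² ≥ k²ε² + n_k² δ², and in particular |X_σ(k)| ≥ δ. -/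

import Mathlib

/-- The extended sequence `σ̄` of length `n+2` attached to `σ ∈ S_n`:
`σ̄(1) = σ̄(n+2) = 0` and `σ̄(i) = σ(i−1)` for `2 ≤ i ≤ n+1` (everything 1-indexed,
a permutation of `Fin n` being identified with the sequence of values
`σ(1), …, σ(n) ∈ {1,…,n}`). -/
def sbar {n : ℕ} (σ : Equiv.Perm (Fin n)) (i : ℕ) : ℕ :=
  if h : 2 ≤ i ∧ i ≤ n + 1 then (σ ⟨i - 2, by omega⟩ : ℕ) + 1 else 0

/-- `S^<_σ(k) = {i : 1 ≤ i ≤ n+1, σ̄(i) < k ≤ σ̄(i+1)}`. -/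
def Sless {n : ℕ} (σ : Equiv.Perm (Fin n)) (k : ℕ) : Finset ℕ :=
  (Finset.Icc 1 (n + 1)).filter (fun i => sbar σ i < k ∧ k ≤ sbar σ (i + 1))

/-- `S^>_σ(k) = {i : 1 ≤ i ≤ n+1, σ̄(i) ≥ k > σ̄(i+1)}`. -/
def Sgtr {n : ℕ} (σ : Equiv.Perm (Fin n)) (k : ℕ) : Finset ℕ :=
  (Finset.Icc 1 (n + 1)).filter (fun i => k ≤ sbar σ i ∧ sbar σ (i + 1) < k)

/-- The inverse permutation, 1-indexed (junk value `0` out of range). -/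
def pinv {n : ℕ} (σ : Equiv.Perm (Fin n)) (l : ℕ) : ℕ :=
  if h : 1 ≤ l ∧ l ≤ n then (σ.symm ⟨l - 1, by omega⟩ : ℕ) + 1 else 0

/-- The permutation values, 1-indexed: `σ(i) ∈ {1,…,n}` for `i ∈ {1,…,n}`
(junk value `0` out of range). -/
def sval {n : ℕ} (σ : Equiv.Perm (Fin n)) (i : ℕ) : ℕ :=
  if h : 1 ≤ i ∧ i ≤ n then (σ ⟨i - 1, by omega⟩ : ℕ) + 1 else 0

/-- An index `i ∈ {1,…,n+1}` is Q-type when `i = 1` or `2 ≤ i ≤ n` and `σ(i) > σ(i−1)`. -/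
def QType {n : ℕ} (σ : Equiv.Perm (Fin n)) (i : ℕ) : Prop :=
  i = 1 ∨ (2 ≤ i ∧ i ≤ n ∧ sval σ (i - 1) < sval σ i)

/-- An index `i ∈ {1,…,n+1}` is P-type when `i = n+1` or `2 ≤ i ≤ n` and `σ(i) < σ(i−1)`. -/
def PType {n : ℕ} (σ : Equiv.Perm (Fin n)) (i : ℕ) : Prop :=
  i = n + 1 ∨ (2 ≤ i ∧ i ≤ n ∧ sval σ i < sval σ (i - 1))

section aux
variable {n : ℕ} (σ : Equiv.Perm (Fin n))

lemma sval_pos_iff (i : ℕ) : 1 ≤ sval σ i ↔ (1 ≤ i ∧ i ≤ n) := by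
  unfold sval; split <;> simp_all

lemma sval_le (i : ℕ) : sval σ i ≤ n := by
  unfold sval; split
  · have := (σ ⟨i - 1, by omega⟩).isLt; omega
  · omega

lemma sbar_succ (i : ℕ) : sbar σ (i + 1) = sval σ i := by
  unfold sbar sval
  by_cases h : 1 ≤ i ∧ i ≤ n
  · rw [dif_pos ⟨by omega, by omega⟩, dif_pos h]
    congr 2 <;> omega
  · rw [dif_neg (by omega), dif_neg h]

lemma sval_pinv (l : ℕ) (h1 : 1 ≤ l) (h2 : l ≤ n) : sval σ (pinv σ l) = l := by
  unfold pinv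
  rw [dif_pos ⟨h1, h2⟩]
  have hlt := (σ.symm ⟨l - 1, by omega⟩).isLt
  unfold sval
  rw [dif_pos ⟨by omega, by omega⟩]
  have : (⟨(σ.symm ⟨l - 1, by omega⟩ : ℕ) + 1 - 1, by omega⟩ : Fin n) = σ.symm ⟨l - 1, by omega⟩ := by
    apply Fin.ext; simp
  rw [this, Equiv.apply_symm_apply]
  simp
  omega

lemma pinv_sval (i : ℕ) (h1 : 1 ≤ i) (h2 : i ≤ n) : pinv σ (sval σ i) = i := by
  unfold sval
  rw [dif_pos ⟨h1, h2⟩]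
  have hlt := (σ ⟨i - 1, by omega⟩).isLt
  unfold pinv
  rw [dif_pos ⟨by omega, by omega⟩]
  have : (⟨(σ ⟨i - 1, by omega⟩ : ℕ) + 1 - 1, by omega⟩ : Fin n) = σ ⟨i - 1, by omega⟩ := by
    apply Fin.ext; simp
  rw [this, Equiv.symm_apply_apply]
  simp
  omega

lemma sbar_eq_sval (i : ℕ) (h : 1 ≤ i) : sbar σ i = sval σ (i - 1) := by
  obtain ⟨j, rfl⟩ : ∃ j, i = j + 1 := ⟨i - 1, by omega⟩
  simp [sbar_succ]

lemma pinv_mem (l : ℕ) (h1 : 1 ≤ l) (h2 : l ≤ n) : 1 ≤ pinv σ l ∧ pinv σ l ≤ n := by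
  have := sval_pinv σ l h1 h2
  have := sval_pos_iff σ (pinv σ l)
  omega
end aux

/-- If the energies satisfy the gap condition `F(i) − F(j) ≥ δ` for `i` Q-type and `j`
P-type, then `X_σ(k) = kε + i Σ_{l=n−k+1}^{n} (F(σ⁻¹(l)) − F(σ⁻¹(l)+1))` satisfies
`|X_σ(k)|² ≥ k²ε² + n_k²δ²`, where `n_k = |S^<_σ(n−k+1)|`; in particular
`|X_σ(k)| ≥ δ`. -/
theorem Xsigma_lower_bound {n : ℕ} (σ : Equiv.Perm (Fin n)) (δ ε : ℝ)
    (hδ : 0 < δ) (hε : 0 ≤ ε) (F : ℕ → ℝ)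
    (hgap : ∀ i j, QType σ i → PType σ j → δ ≤ F i - F j)
    (k : ℕ) (hk : 1 ≤ k) (hk' : k ≤ n) :
    let X : ℂ := (k : ℂ) * (ε : ℂ) +
      Complex.I * ∑ l ∈ Finset.Icc (n - k + 1) n,
        ((F (pinv σ l) : ℂ) - (F (pinv σ l + 1) : ℂ))
    (k : ℝ) ^ 2 * ε ^ 2 + ((Sless σ (n - k + 1)).card : ℝ) ^ 2 * δ ^ 2
        ≤ ‖X‖ ^ 2 ∧
      δ ≤ ‖X‖ := by
  intro X
  set m : ℕ := n - k + 1 with hm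
  have hm1 : 1 ≤ m := by omega
  have hm2 : m ≤ n := by omega
  set A : Finset ℕ := (Finset.Icc 1 n).filter (fun i => m ≤ sval σ i) with hA
  set B : Finset ℕ := A.image (· + 1) with hB
  have hmemA : ∀ i, i ∈ A ↔ (1 ≤ i ∧ i ≤ n ∧ m ≤ sval σ i) := by
    intro i; simp [hA, Finset.mem_filter, Finset.mem_Icc, and_assoc]
  have hmemB : ∀ j, j ∈ B ↔ (2 ≤ j ∧ j ≤ n + 1 ∧ m ≤ sval σ (j - 1)) := by
    intro j
    simp only [hB, Finset.mem_image]
    constructor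
    · rintro ⟨i, hi, rfl⟩
      rw [hmemA] at hi
      refine ⟨by omega, by omega, ?_⟩
      simpa [Nat.add_sub_cancel] using hi.2.2
    · rintro ⟨h1, h2, h3⟩
      refine ⟨j - 1, ?_, by omega⟩
      rw [hmemA]
      have := (sval_pos_iff σ (j-1)).mp (by omega)
      exact ⟨by omega, by omega, h3⟩
  -- Sless = A \ B
  have hSless : Sless σ m = A \ B := by
    ext i
    simp only [Sless, Finset.mem_filter, Finset.mem_Icc, Finset.mem_sdiff, hmemA, hmemB]
    constructor
    · rintro ⟨⟨h1, h2⟩, h3, h4⟩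
      rw [sbar_succ] at h4
      have hi := (sval_pos_iff σ i).mp (by omega)
      refine ⟨⟨hi.1, hi.2, h4⟩, ?_⟩
      rintro ⟨g1, g2, g3⟩
      have := sbar_eq_sval σ i (by omega)
      omega
    · rintro ⟨⟨h1, h2, h3⟩, h4⟩
      have hsb : sbar σ i = sval σ (i - 1) := sbar_eq_sval σ i h1
      rw [sbar_succ]
      refine ⟨⟨h1, by omega⟩, ?_, h3⟩
      rw [hsb]
      by_contra hc
      have hpos := (sval_pos_iff σ (i - 1)).mp (by omega)
      exact h4 ⟨by omega, by omega, by omega⟩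
  -- Q-type / P-type
  have hQ : ∀ i ∈ A \ B, QType σ i := by
    intro i hi
    rw [Finset.mem_sdiff, hmemA, hmemB] at hi
    obtain ⟨⟨h1, h2, h3⟩, h4⟩ := hi
    rcases eq_or_lt_of_le h1 with h | h
    · exact Or.inl h.symm
    · right
      refine ⟨by omega, h2, ?_⟩
      by_contra hc
      exact h4 ⟨by omega, by omega, by omega⟩
  have hP : ∀ j ∈ B \ A, PType σ j := by
    intro j hj
    rw [Finset.mem_sdiff, hmemA, hmemB] at hj
    obtain ⟨⟨h1, h2, h3⟩, h4⟩ := hj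
    rcases eq_or_lt_of_le h2 with h | h
    · exact Or.inl h
    · right
      refine ⟨h1, by omega, ?_⟩
      by_contra hc
      exact h4 ⟨by omega, by omega, by omega⟩
  -- cardinalities
  have hcardAB : A.card = B.card := by
    rw [hB, Finset.card_image_of_injective _ (add_left_injective 1)]
  have hcard : (A \ B).card = (B \ A).card := by
    have h1 := Finset.card_sdiff_add_card_inter A B
    have h2 := Finset.card_sdiff_add_card_inter B A
    rw [Finset.inter_comm] at h2
    omega
  -- nonempty
  have hAne : A.Nonempty := by
    refine ⟨pinv σ m, ?_⟩
    rw [hmemA]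
    have := pinv_mem σ m hm1 hm2
    have := sval_pinv σ m hm1 hm2
    omega
  have hQne : (A \ B).Nonempty := by
    refine ⟨A.min' hAne, Finset.mem_sdiff.mpr ⟨A.min'_mem hAne, ?_⟩⟩
    intro hmem
    rw [hB, Finset.mem_image] at hmem
    obtain ⟨j, hj, hje⟩ := hmem
    have := A.min'_le j hj
    omega
  -- the real sum
  set Sr : ℝ := ∑ l ∈ Finset.Icc m n, (F (pinv σ l) - F (pinv σ l + 1)) with hSr
  have hreindex : Sr = ∑ i ∈ A, (F i - F (i + 1)) := by
    rw [hSr]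
    refine Finset.sum_nbij' (i := fun l => pinv σ l) (j := fun i => sval σ i)
      ?_ ?_ ?_ ?_ ?_
    · intro l hl
      rw [Finset.mem_Icc] at hl
      rw [hmemA]
      have u1 := pinv_mem σ l (by omega) hl.2
      have u2 := sval_pinv σ l (by omega) hl.2
      show 1 ≤ pinv σ l ∧ pinv σ l ≤ n ∧ m ≤ sval σ (pinv σ l)
      omega
    · intro i hi
      rw [hmemA] at hi
      rw [Finset.mem_Icc]
      exact ⟨hi.2.2, sval_le σ i⟩
    · intro l hl
      rw [Finset.mem_Icc] at hl
      exact sval_pinv σ l (by omega) hl.2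
    · intro i hi
      rw [hmemA] at hi
      exact pinv_sval σ i hi.1 hi.2.1
    · intro l hl; rfl
  -- split the telescoping sum
  have hsplit : Sr = (∑ i ∈ A \ B, F i) - ∑ j ∈ B \ A, F j := by
    rw [hreindex, Finset.sum_sub_distrib]
    have : ∑ i ∈ A, F (i + 1) = ∑ j ∈ B, F j := by
      rw [hB, Finset.sum_image (by intro x _ y _ h; dsimp only at h; omega)]
    rw [this, ← Finset.sum_sdiff_sub_sum_sdiff]
  -- pair up via a bijection
  have e : {x // x ∈ A \ B} ≃ {x // x ∈ B \ A} := Finset.equivOfCardEq hcard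
  have hPsum : ∑ j ∈ B \ A, F j = ∑ i : {x // x ∈ A \ B}, F (e i : ℕ) := by
    rw [← Finset.sum_coe_sort (B \ A) F]
    exact (Equiv.sum_comp e (fun j => F (j : ℕ))).symm
  have hbound : ((A \ B).card : ℝ) * δ ≤ Sr := by
    rw [hsplit, hPsum, ← Finset.sum_coe_sort (A \ B) F, ← Finset.sum_sub_distrib]
    have := Finset.card_nsmul_le_sum Finset.univ
      (fun i : {x // x ∈ A \ B} => F (i : ℕ) - F (e i : ℕ)) δ
      (fun i _ => hgap _ _ (hQ _ i.2) (hP _ (e i).2))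
    simpa [Finset.card_univ, Fintype.card_coe, nsmul_eq_mul, mul_comm] using this
  -- complexity: compute |X|^2
  have hXeq : X = ((((k : ℝ) * ε : ℝ)) : ℂ) + Complex.I * (Sr : ℂ) := by
    simp only [X, hSr]
    push_cast
    ring
  have habs : ‖X‖ ^ 2 = ((k : ℝ) * ε) ^ 2 + Sr ^ 2 := by
    rw [hXeq, Complex.sq_norm, Complex.normSq_apply]
    simp [Complex.add_re, Complex.add_im, Complex.mul_re, Complex.mul_im]
    ring
  have hcardS : ((Sless σ m).card : ℝ) = ((A \ B).card : ℝ) := by rw [hSless]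
  have hc1 : 1 ≤ ((A \ B).card : ℝ) := by
    have := Finset.card_pos.mpr hQne
    exact_mod_cast this
  have hSrpos : ((A \ B).card : ℝ) * δ ≤ Sr := hbound
  have hδc : δ ≤ ((A \ B).card : ℝ) * δ := by nlinarith
  constructor
  · rw [habs, hcardS]
    nlinarith [sq_nonneg ((k:ℝ) * ε), Finset.card_pos.mpr hQne]
  · have h2 : δ ^ 2 ≤ ‖X‖ ^ 2 := by
      rw [habs]
      nlinarith
    nlinarith [norm_nonneg X]
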